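/- arXiv:0810.2327 — 2 statements merged into one kernel-verified Lean document; each statement's English description precedes it below -/
import Mathlib

section
/- Let {M_k}_{k=1}^n be a POVM on ℂ^d such that M_k = (d/n)·P_k for rank-one projectors P_k forming a proper spherical 2-design, i.e., (1/n)·Σ_k P_k ⊗ P_k = (𝟙 + F)/(d(d+1)) where F is the swap operator on ℂ^d ⊗ ℂ^d. Then for any traceless Hermitian operator ξ on ℂ^d, Σ_{k=1}^n |Tr(ξ M_k)| ≥ (1/(2(d+1)))·‖ξ‖₁. -/
open Kronecker ComplexOrder

/-- The swap operator `F` on `ℂ^d ⊗ ℂ^d`. -/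
def swapOp (d : ℕ) : Matrix (Fin d × Fin d) (Fin d × Fin d) ℂ :=
  fun p q => if p.1 = q.2 ∧ p.2 = q.1 then 1 else 0

/-- The trace norm of a Hermitian matrix: sum of absolute values of its eigenvalues. -/
noncomputable def traceNorm {d : ℕ} {A : Matrix (Fin d) (Fin d) ℂ}
    (hA : A.IsHermitian) : ℝ :=
  ∑ i, |hA.eigenvalues i|

open Matrix

lemma trace_kron_swap {d : ℕ} (A B : Matrix (Fin d) (Fin d) ℂ) :
    ((A ⊗ₖ B) * swapOp d).trace = (A * B).trace := by
  classical
  simp only [Matrix.trace, Matrix.diag, Matrix.mul_apply, swapOp, Matrix.kroneckerMap_apply,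
    mul_ite, mul_one, mul_zero]
  rw [Fintype.sum_prod_type]
  simp [Fintype.sum_prod_type, ite_and, Finset.sum_ite_eq, Finset.sum_ite_eq', mul_comm]

lemma trace_ct_mul_self {d : ℕ} (X : Matrix (Fin d) (Fin d) ℂ) :
    (Xᴴ * X).trace = ((∑ j, ∑ i, Complex.normSq (X i j) : ℝ) : ℂ) := by
  simp only [Matrix.trace, Matrix.diag, Matrix.mul_apply, Matrix.conjTranspose_apply]
  push_cast
  congr 1; ext j; congr 1; ext i
  rw [Complex.normSq_eq_conj_mul_self]; rfl

lemma trace_proj_mul {d : ℕ} {Q P : Matrix (Fin d) (Fin d) ℂ}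
    (hQ : Q.IsHermitian) (hP : P.IsHermitian) (hQ2 : Q * Q = Q) (hP2 : P * P = P) :
    0 ≤ ((Q * P).trace.re) ∧ (Q * P).trace.im = 0 := by
  have key : (Q * P).trace = ((P * Q)ᴴ * (P * Q)).trace := by
    rw [Matrix.conjTranspose_mul, hQ.eq, hP.eq]
    calc (Q * P).trace = ((Q * Q) * P).trace := by rw [hQ2]
    _ = (Q * ((Q * P) * P)).trace := by rw [Matrix.mul_assoc]; rw [show (Q*P)*P = Q*(P*P) from Matrix.mul_assoc Q P P, hP2]
    _ = (((Q * P) * P) * Q).trace := by rw [Matrix.trace_mul_comm]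
    _ = (Q * P * (P * Q)).trace := by rw [Matrix.mul_assoc]
  rw [key, trace_ct_mul_self]
  constructor
  · rw [Complex.ofReal_re]
    apply Finset.sum_nonneg; intro j _; apply Finset.sum_nonneg; intro i _
    exact Complex.normSq_nonneg _
  · rw [Complex.ofReal_im]

lemma pair_trace {d n : ℕ} (hd : 0 < d) (hn : 0 < n)
    (P : Fin n → Matrix (Fin d) (Fin d) ℂ)
    (hdesign : (1 / (n : ℂ)) • ∑ k, P k ⊗ₖ P k
      = (1 / ((d : ℂ) * (d + 1))) • (1 + swapOp d))
    (A B : Matrix (Fin d) (Fin d) ℂ) :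
    ∑ k, (A * P k).trace * (B * P k).trace
      = ((n : ℂ) / ((d : ℂ) * ((d : ℂ) + 1))) * (A.trace * B.trace + (A * B).trace) := by
  have h := congrArg (fun X => ((A ⊗ₖ B) * X).trace) hdesign
  simp only [Matrix.mul_smul, Matrix.trace_smul, Matrix.mul_sum, Matrix.trace_sum,
    Matrix.mul_add, Matrix.mul_one, Matrix.trace_add, ← Matrix.mul_kronecker_mul,
    Matrix.trace_kronecker, trace_kron_swap, smul_eq_mul] at h
  have hn' : (n : ℂ) ≠ 0 := Nat.cast_ne_zero.mpr hn.ne'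
  have hd' : (d : ℂ) * ((d : ℂ) + 1) ≠ 0 := by
    apply mul_ne_zero (Nat.cast_ne_zero.mpr hd.ne')
    intro h0
    have := congrArg Complex.re h0
    simp at this
    linarith [Nat.cast_nonneg (α := ℝ) d, this]
  field_simp at h
  rw [div_mul_eq_mul_div, eq_div_iff hd']
  linear_combination h

lemma pos_proj {d : ℕ} (ξ : Matrix (Fin d) (Fin d) ℂ) (hξ : ξ.IsHermitian) :
    ∃ Q : Matrix (Fin d) (Fin d) ℂ, Q.IsHermitian ∧ Q * Q = Q ∧
      (ξ * Q).trace
        = ((∑ i, if 0 < hξ.eigenvalues i then hξ.eigenvalues i else 0 : ℝ) : ℂ) := by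
  classical
  set U : Matrix (Fin d) (Fin d) ℂ := (hξ.eigenvectorUnitary : Matrix (Fin d) (Fin d) ℂ)
    with hU
  have hUsU : star U * U = 1 := Unitary.coe_star_mul_self hξ.eigenvectorUnitary
  have hUUs : U * star U = 1 := Unitary.coe_mul_star_self hξ.eigenvectorUnitary
  set E : Matrix (Fin d) (Fin d) ℂ :=
    Matrix.diagonal (fun i => if 0 < hξ.eigenvalues i then (1 : ℂ) else 0) with hE
  refine ⟨U * E * star U, ?_, ?_, ?_⟩
  · unfold Matrix.IsHermitian
    rw [Matrix.star_eq_conjTranspose, Matrix.conjTranspose_mul, Matrix.conjTranspose_mul,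
      Matrix.conjTranspose_conjTranspose, ← Matrix.star_eq_conjTranspose E,
      ← Matrix.star_eq_conjTranspose U]
    have hEstar : star E = E := by
      rw [hE, Matrix.star_eq_conjTranspose, Matrix.diagonal_conjTranspose]
      apply congrArg Matrix.diagonal
      funext i
      by_cases h : 0 < hξ.eigenvalues i <;> simp [h]
    rw [hEstar, Matrix.mul_assoc]
  · have hEE : E * E = E := by
      rw [hE, Matrix.diagonal_mul_diagonal]
      apply congrArg Matrix.diagonal
      funext i
      by_cases h : 0 < hξ.eigenvalues i <;> simp [h]
    calc (U * E * star U) * (U * E * star U)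
        = U * E * (star U * U) * E * star U := by
          simp only [Matrix.mul_assoc]
      _ = U * (E * E) * star U := by rw [hUsU]; simp only [Matrix.mul_assoc, Matrix.one_mul]
      _ = U * E * star U := by rw [hEE, Matrix.mul_assoc]
  · conv_lhs => rw [hξ.spectral_theorem, Unitary.conjStarAlgAut_apply]
    rw [← hU]
    have : U * Matrix.diagonal (RCLike.ofReal ∘ hξ.eigenvalues) * star U * (U * E * star U)
        = U * (Matrix.diagonal (RCLike.ofReal ∘ hξ.eigenvalues) * E) * star U := by
      calc U * Matrix.diagonal (RCLike.ofReal ∘ hξ.eigenvalues) * star U * (U * E * star U)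
          = U * Matrix.diagonal (RCLike.ofReal ∘ hξ.eigenvalues) * (star U * U) * E * star U := by
            simp only [Matrix.mul_assoc]
        _ = _ := by rw [hUsU]; simp only [Matrix.mul_assoc, Matrix.one_mul]
    rw [this, Matrix.trace_mul_cycle, hUsU, Matrix.one_mul,
      Matrix.diagonal_mul_diagonal, Matrix.trace_diagonal]
    push_cast
    congr 1
    funext i
    by_cases h : 0 < hξ.eigenvalues i <;> simp [h]

lemma trace_eq_sum_eigs {d : ℕ} (ξ : Matrix (Fin d) (Fin d) ℂ) (hξ : ξ.IsHermitian) :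
    ξ.trace = ((∑ i, hξ.eigenvalues i : ℝ) : ℂ) := by
  set U : Matrix (Fin d) (Fin d) ℂ := (hξ.eigenvectorUnitary : Matrix (Fin d) (Fin d) ℂ)
  have hUsU : star U * U = 1 := Unitary.coe_star_mul_self hξ.eigenvectorUnitary
  conv_lhs => rw [hξ.spectral_theorem, Unitary.conjStarAlgAut_apply]
  rw [Matrix.trace_mul_cycle, hUsU, Matrix.one_mul, Matrix.trace_diagonal]
  push_cast
  rfl

/-- For a POVM `M_k = (d/n) P_k` built from a proper spherical 2-design of rank-one
projectors `P_k`, and any traceless Hermitian `ξ`,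
`Σ_k |Tr(ξ M_k)| ≥ ‖ξ‖₁ / (2(d+1))`. -/
theorem two_design_povm_bias {d n : ℕ} (hd : 0 < d) (hn : 0 < n)
    (P : Fin n → Matrix (Fin d) (Fin d) ℂ)
    (hherm : ∀ k, (P k).IsHermitian)
    (hidem : ∀ k, P k * P k = P k)
    (hrank1 : ∀ k, (P k).trace = 1)
    (hdesign : (1 / (n : ℂ)) • ∑ k, P k ⊗ₖ P k
      = (1 / ((d : ℂ) * (d + 1))) • (1 + swapOp d))
    (ξ : Matrix (Fin d) (Fin d) ℂ) (hξ : ξ.IsHermitian) (hξ0 : ξ.trace = 0) :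
    ∑ k, ‖(ξ * (((d : ℂ) / n) • P k)).trace‖
      ≥ (1 / (2 * (d + 1) : ℝ)) * traceNorm hξ := by
  classical
  obtain ⟨Q, hQh, hQ2, hQtr⟩ := pos_proj ξ hξ
  set r : ℝ := ∑ i, if 0 < hξ.eigenvalues i then hξ.eigenvalues i else 0 with hr
  have hr0 : 0 ≤ r := by
    apply Finset.sum_nonneg
    intro i _
    split_ifs with h
    · exact le_of_lt h
    · exact le_refl 0
  have hsum0 : ∑ i, hξ.eigenvalues i = 0 := by
    have h := trace_eq_sum_eigs ξ hξ
    rw [hξ0] at h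
    exact_mod_cast h.symm
  have htn : traceNorm hξ = 2 * r := by
    rw [traceNorm, hr]
    have : ∀ i ∈ Finset.univ, |hξ.eigenvalues i|
        = 2 * (if 0 < hξ.eigenvalues i then hξ.eigenvalues i else 0) - hξ.eigenvalues i := by
      intro i _
      split_ifs with h
      · rw [abs_of_pos h]; ring
      · rw [abs_of_nonpos (not_lt.mp h)]; ring
    rw [Finset.sum_congr rfl this, Finset.sum_sub_distrib, hsum0, ← Finset.mul_sum]
    ring
  -- pairing identities
  have hpair := pair_trace hd hn P hdesign
  have h1 : ∑ k, (ξ * P k).trace = 0 := by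
    have h := hpair ξ 1
    simp only [Matrix.one_mul, hrank1, mul_one, Matrix.mul_one, hξ0, Matrix.trace_one,
      zero_mul, add_zero, mul_zero, zero_add] at h
    exact h
  have h2 : ∑ k, (ξ * P k).trace * (Q * P k).trace
      = ((n : ℂ) / ((d : ℂ) * ((d : ℂ) + 1))) * (r : ℂ) := by
    have h := hpair ξ Q
    rw [hξ0, hQtr] at h
    rw [h]
    ring
  -- properties of u k
  have hu := fun k => trace_proj_mul hQh (hherm k) hQ2 (hidem k)
  have hu1 : ∀ k, ((Q * P k).trace).re ≤ 1 := by
    intro k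
    have h1Q : (1 - Q).IsHermitian := (Matrix.isHermitian_one).sub hQh
    have h1Q2 : (1 - Q) * (1 - Q) = 1 - Q := by
      have e : (1 - Q) * (1 - Q) = 1 - Q - (Q - Q * Q) := by noncomm_ring
      rw [e, hQ2, sub_self, sub_zero]
    have h := (trace_proj_mul h1Q (hherm k) h1Q2 (hidem k)).1
    rw [Matrix.sub_mul, Matrix.one_mul, Matrix.trace_sub, Complex.sub_re, hrank1] at h
    simp only [Complex.one_re] at h
    linarith
  -- rewrite summand
  have hkey : ∑ k, ‖(ξ * (((d : ℂ) / n) • P k)).trace‖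
      = ((d : ℝ) / n) * ∑ k, ‖(ξ * P k).trace‖ := by
    rw [Finset.mul_sum]
    apply Finset.sum_congr rfl
    intro k _
    rw [Matrix.mul_smul, Matrix.trace_smul, smul_eq_mul,
      show ‖((d : ℂ) / n) * (ξ * P k).trace‖
          = ‖(d : ℂ) / n‖ * ‖(ξ * P k).trace‖
        from norm_mul _ _]
    congr 1
    rw [norm_div, Complex.norm_natCast, Complex.norm_natCast]
  -- pointwise bound
  have hptw : ∀ k, (2 * ((Q * P k).trace).re - 1) * ((ξ * P k).trace).re
      ≤ ‖(ξ * P k).trace‖ := by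
    intro k
    have hc : |2 * ((Q * P k).trace).re - 1| ≤ 1 := by
      have := (hu k).1
      have := hu1 k
      rw [abs_le]
      constructor <;> linarith
    calc (2 * ((Q * P k).trace).re - 1) * ((ξ * P k).trace).re
        ≤ |(2 * ((Q * P k).trace).re - 1) * ((ξ * P k).trace).re| := le_abs_self _
      _ = |2 * ((Q * P k).trace).re - 1| * |((ξ * P k).trace).re| := abs_mul _ _
      _ ≤ 1 * |((ξ * P k).trace).re| := by
          apply mul_le_mul_of_nonneg_right hc (abs_nonneg _)
      _ = |((ξ * P k).trace).re| := one_mul _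
      _ ≤ ‖(ξ * P k).trace‖ := Complex.abs_re_le_norm _
  -- sum of the lower bounds
  have hA : ∑ k, ((ξ * P k).trace).re = 0 := by
    have := congrArg Complex.re h1
    rw [Complex.re_sum] at this
    simpa using this
  have hB : ∑ k, ((Q * P k).trace).re * ((ξ * P k).trace).re
      = ((n : ℝ) / ((d : ℝ) * ((d : ℝ) + 1))) * r := by
    have heq : ((n : ℂ) / ((d : ℂ) * ((d : ℂ) + 1))) * (r : ℂ)
        = ((((n : ℝ) / ((d : ℝ) * ((d : ℝ) + 1))) * r : ℝ) : ℂ) := by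
      push_cast
      ring
    have h := congrArg Complex.re h2
    rw [heq, Complex.ofReal_re, Complex.re_sum] at h
    rw [← h]
    apply Finset.sum_congr rfl
    intro k _
    rw [Complex.mul_re, (hu k).2, mul_zero, sub_zero]
    ring
  have hlb : ∑ k, (2 * ((Q * P k).trace).re - 1) * ((ξ * P k).trace).re
      = 2 * (((n : ℝ) / ((d : ℝ) * ((d : ℝ) + 1))) * r) := by
    have : ∀ k ∈ Finset.univ, (2 * ((Q * P k).trace).re - 1) * ((ξ * P k).trace).re
        = 2 * (((Q * P k).trace).re * ((ξ * P k).trace).re) - ((ξ * P k).trace).re := by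
      intro k _
      ring
    rw [Finset.sum_congr rfl this, Finset.sum_sub_distrib, hA, ← Finset.mul_sum, hB, sub_zero]
  -- finish
  have hdR : (0 : ℝ) < d := Nat.cast_pos.mpr hd
  have hnR : (0 : ℝ) < n := Nat.cast_pos.mpr hn
  have hstep : ∑ k, ‖(ξ * P k).trace‖
      ≥ 2 * (((n : ℝ) / ((d : ℝ) * ((d : ℝ) + 1))) * r) := by
    rw [← hlb]
    exact Finset.sum_le_sum fun k _ => hptw k
  rw [hkey, htn]
  have : ((d : ℝ) / n) * ∑ k, ‖(ξ * P k).trace‖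
      ≥ ((d : ℝ) / n) * (2 * (((n : ℝ) / ((d : ℝ) * ((d : ℝ) + 1))) * r)) := by
    apply mul_le_mul_of_nonneg_left hstep (le_of_lt (div_pos hdR hnR))
  have hval : ((d : ℝ) / n) * (2 * (((n : ℝ) / ((d : ℝ) * ((d : ℝ) + 1))) * r))
      = 2 * r / ((d : ℝ) + 1) := by
    field_simp
  rw [hval] at this
  have hfin : (1 / (2 * ((d : ℝ) + 1))) * (2 * r) ≤ 2 * r / ((d : ℝ) + 1) := by
    have h2d : (0 : ℝ) < (d : ℝ) + 1 := by positivity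
    rw [← sub_nonneg]
    have he : 2 * r / ((d : ℝ) + 1) - (1 / (2 * ((d : ℝ) + 1))) * (2 * r)
        = r / ((d : ℝ) + 1) := by
      field_simp
      ring
    rw [he]
    positivity
  exact le_trans hfin this
end

section
/- Let (p_k, P_k) be a weighted spherical 4-design POVM on ℂ^d with POVM elements M_k = d·p_k·P_k, and let ρ, σ be density operators. Then Σ_k |Tr((ρ−σ)M_k)| ≥ (1/3)·‖ρ−σ‖₂ ≥ (1/(3√d))·‖ρ−σ‖₁, where ‖·‖₂ is the Hilbert–Schmidt norm. -/
open ComplexOrder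

/-- The 4-fold tensor power of a matrix on `ℂ^d`, as a matrix on `(ℂ^d)^{⊗4}`
with index type `Fin 4 → Fin d`. -/
def tpow4 {d : ℕ} (A : Matrix (Fin d) (Fin d) ℂ) :
    Matrix (Fin 4 → Fin d) (Fin 4 → Fin d) ℂ :=
  fun a b => ∏ i, A (a i) (b i)

/-- The unitary permuting the four tensor factors of `(ℂ^d)^{⊗4}` according to `π`. -/
def permOp (d : ℕ) (π : Equiv.Perm (Fin 4)) :
    Matrix (Fin 4 → Fin d) (Fin 4 → Fin d) ℂ :=
  fun a b => if ∀ i, a (π i) = b i then 1 else 0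

namespace FourDesignAux

abbrev Mat (d : ℕ) := Matrix (Fin d) (Fin d) ℂ

def pm (v w : Fin 4 → Fin 4) (h1 : ∀ x, w (v x) = x) (h2 : ∀ x, v (w x) = x) :
    Equiv.Perm (Fin 4) := ⟨v, w, h1, h2⟩

@[simp] lemma pm_apply (v w h1 h2 x) : pm v w h1 h2 x = v x := rfl

noncomputable def mten {d : ℕ} (f : Fin 4 → Mat d) :
    Matrix (Fin 4 → Fin d) (Fin 4 → Fin d) ℂ :=
  fun a b => ∏ i, f i (a i) (b i)

noncomputable def W {d : ℕ} (f : Fin 4 → Mat d) (π : Equiv.Perm (Fin 4)) : ℂ :=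
  ∑ a : Fin 4 → Fin d, ∏ i, f i (a i) (a (π i))

def e0123 (d : ℕ) : (Fin d × Fin d × Fin d × Fin d) ≃ (Fin 4 → Fin d) where
  toFun x := ![x.1, x.2.1, x.2.2.1, x.2.2.2]
  invFun a := (a 0, a 1, a 2, a 3)
  left_inv x := rfl
  right_inv a := by funext i; fin_cases i <;> rfl

lemma sum_pi4_0123 {d : ℕ} {M : Type*} [AddCommMonoid M] (g : (Fin 4 → Fin d) → M) :
    ∑ a : Fin 4 → Fin d, g a = ∑ x0, ∑ x1, ∑ x2, ∑ x3 , g ![x0, x1, x2, x3] := by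
  rw [← Equiv.sum_comp (e0123 d) g]
  simp only [Fintype.sum_prod_type]
  rfl

def e0132 (d : ℕ) : (Fin d × Fin d × Fin d × Fin d) ≃ (Fin 4 → Fin d) where
  toFun x := ![x.1, x.2.1, x.2.2.2, x.2.2.1]
  invFun a := (a 0, a 1, a 3, a 2)
  left_inv x := rfl
  right_inv a := by funext i; fin_cases i <;> rfl

lemma sum_pi4_0132 {d : ℕ} {M : Type*} [AddCommMonoid M] (g : (Fin 4 → Fin d) → M) :
    ∑ a : Fin 4 → Fin d, g a = ∑ x0, ∑ x1, ∑ x3, ∑ x2 , g ![x0, x1, x2, x3] := by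
  rw [← Equiv.sum_comp (e0132 d) g]
  simp only [Fintype.sum_prod_type]
  rfl

def e0213 (d : ℕ) : (Fin d × Fin d × Fin d × Fin d) ≃ (Fin 4 → Fin d) where
  toFun x := ![x.1, x.2.2.1, x.2.1, x.2.2.2]
  invFun a := (a 0, a 2, a 1, a 3)
  left_inv x := rfl
  right_inv a := by funext i; fin_cases i <;> rfl

lemma sum_pi4_0213 {d : ℕ} {M : Type*} [AddCommMonoid M] (g : (Fin 4 → Fin d) → M) :
    ∑ a : Fin 4 → Fin d, g a = ∑ x0, ∑ x2, ∑ x1, ∑ x3 , g ![x0, x1, x2, x3] := by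
  rw [← Equiv.sum_comp (e0213 d) g]
  simp only [Fintype.sum_prod_type]
  rfl

def e0231 (d : ℕ) : (Fin d × Fin d × Fin d × Fin d) ≃ (Fin 4 → Fin d) where
  toFun x := ![x.1, x.2.2.2, x.2.1, x.2.2.1]
  invFun a := (a 0, a 2, a 3, a 1)
  left_inv x := rfl
  right_inv a := by funext i; fin_cases i <;> rfl

lemma sum_pi4_0231 {d : ℕ} {M : Type*} [AddCommMonoid M] (g : (Fin 4 → Fin d) → M) :
    ∑ a : Fin 4 → Fin d, g a = ∑ x0, ∑ x2, ∑ x3, ∑ x1 , g ![x0, x1, x2, x3] := by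
  rw [← Equiv.sum_comp (e0231 d) g]
  simp only [Fintype.sum_prod_type]
  rfl

def e0312 (d : ℕ) : (Fin d × Fin d × Fin d × Fin d) ≃ (Fin 4 → Fin d) where
  toFun x := ![x.1, x.2.2.1, x.2.2.2, x.2.1]
  invFun a := (a 0, a 3, a 1, a 2)
  left_inv x := rfl
  right_inv a := by funext i; fin_cases i <;> rfl

lemma sum_pi4_0312 {d : ℕ} {M : Type*} [AddCommMonoid M] (g : (Fin 4 → Fin d) → M) :
    ∑ a : Fin 4 → Fin d, g a = ∑ x0, ∑ x3, ∑ x1, ∑ x2 , g ![x0, x1, x2, x3] := by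
  rw [← Equiv.sum_comp (e0312 d) g]
  simp only [Fintype.sum_prod_type]
  rfl

def e0321 (d : ℕ) : (Fin d × Fin d × Fin d × Fin d) ≃ (Fin 4 → Fin d) where
  toFun x := ![x.1, x.2.2.2, x.2.2.1, x.2.1]
  invFun a := (a 0, a 3, a 2, a 1)
  left_inv x := rfl
  right_inv a := by funext i; fin_cases i <;> rfl

lemma sum_pi4_0321 {d : ℕ} {M : Type*} [AddCommMonoid M] (g : (Fin 4 → Fin d) → M) :
    ∑ a : Fin 4 → Fin d, g a = ∑ x0, ∑ x3, ∑ x2, ∑ x1 , g ![x0, x1, x2, x3] := by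
  rw [← Equiv.sum_comp (e0321 d) g]
  simp only [Fintype.sum_prod_type]
  rfl

def q1 : Equiv.Perm (Fin 4) := pm ![0,1,2,3] ![0,1,2,3] (by decide) (by decide)
def q2 : Equiv.Perm (Fin 4) := pm ![0,1,3,2] ![0,1,3,2] (by decide) (by decide)
def q3 : Equiv.Perm (Fin 4) := pm ![0,2,1,3] ![0,2,1,3] (by decide) (by decide)
def q4 : Equiv.Perm (Fin 4) := pm ![0,2,3,1] ![0,3,1,2] (by decide) (by decide)
def q5 : Equiv.Perm (Fin 4) := pm ![0,3,1,2] ![0,2,3,1] (by decide) (by decide)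
def q6 : Equiv.Perm (Fin 4) := pm ![0,3,2,1] ![0,3,2,1] (by decide) (by decide)
def q7 : Equiv.Perm (Fin 4) := pm ![1,0,2,3] ![1,0,2,3] (by decide) (by decide)
def q8 : Equiv.Perm (Fin 4) := pm ![1,0,3,2] ![1,0,3,2] (by decide) (by decide)
def q9 : Equiv.Perm (Fin 4) := pm ![1,2,0,3] ![2,0,1,3] (by decide) (by decide)
def q10 : Equiv.Perm (Fin 4) := pm ![1,2,3,0] ![3,0,1,2] (by decide) (by decide)
def q11 : Equiv.Perm (Fin 4) := pm ![1,3,0,2] ![2,0,3,1] (by decide) (by decide)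
def q12 : Equiv.Perm (Fin 4) := pm ![1,3,2,0] ![3,0,2,1] (by decide) (by decide)
def q13 : Equiv.Perm (Fin 4) := pm ![2,0,1,3] ![1,2,0,3] (by decide) (by decide)
def q14 : Equiv.Perm (Fin 4) := pm ![2,0,3,1] ![1,3,0,2] (by decide) (by decide)
def q15 : Equiv.Perm (Fin 4) := pm ![2,1,0,3] ![2,1,0,3] (by decide) (by decide)
def q16 : Equiv.Perm (Fin 4) := pm ![2,1,3,0] ![3,1,0,2] (by decide) (by decide)
def q17 : Equiv.Perm (Fin 4) := pm ![2,3,0,1] ![2,3,0,1] (by decide) (by decide)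
def q18 : Equiv.Perm (Fin 4) := pm ![2,3,1,0] ![3,2,0,1] (by decide) (by decide)
def q19 : Equiv.Perm (Fin 4) := pm ![3,0,1,2] ![1,2,3,0] (by decide) (by decide)
def q20 : Equiv.Perm (Fin 4) := pm ![3,0,2,1] ![1,3,2,0] (by decide) (by decide)
def q21 : Equiv.Perm (Fin 4) := pm ![3,1,0,2] ![2,1,3,0] (by decide) (by decide)
def q22 : Equiv.Perm (Fin 4) := pm ![3,1,2,0] ![3,1,2,0] (by decide) (by decide)
def q23 : Equiv.Perm (Fin 4) := pm ![3,2,0,1] ![2,3,1,0] (by decide) (by decide)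
def q24 : Equiv.Perm (Fin 4) := pm ![3,2,1,0] ![3,2,1,0] (by decide) (by decide)

def Fperms : Fin 24 → Equiv.Perm (Fin 4) := ![q1, q2, q3, q4, q5, q6, q7, q8, q9, q10, q11, q12, q13, q14, q15, q16, q17, q18, q19, q20, q21, q22, q23, q24]

lemma Wval1 {d : ℕ} (A B C D : Mat d) :
    W ![A,B,C,D] q1 = Matrix.trace D * Matrix.trace C * Matrix.trace B * Matrix.trace A := by
  rw [W, sum_pi4_0123]
  simp only [Matrix.trace, Matrix.diag, Matrix.mul_apply, Fin.prod_univ_four, pm_apply, q1,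
    Matrix.cons_val', Matrix.cons_val_zero, Matrix.cons_val_one, Matrix.head_cons,
    Matrix.cons_val_two, Matrix.tail_cons, Matrix.cons_val_three, Matrix.head_fin_const,
    Finset.sum_mul, Finset.mul_sum]
  exact Finset.sum_congr rfl fun x0 _ => Finset.sum_congr rfl fun x1 _ => Finset.sum_congr rfl fun x2 _ => Finset.sum_congr rfl fun x3 _ => by ring

lemma Wval2 {d : ℕ} (A B C D : Mat d) :
    W ![A,B,C,D] q2 = Matrix.trace (C * D) * Matrix.trace B * Matrix.trace A := by
  rw [W, sum_pi4_0123]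
  simp only [Matrix.trace, Matrix.diag, Matrix.mul_apply, Fin.prod_univ_four, pm_apply, q2,
    Matrix.cons_val', Matrix.cons_val_zero, Matrix.cons_val_one, Matrix.head_cons,
    Matrix.cons_val_two, Matrix.tail_cons, Matrix.cons_val_three, Matrix.head_fin_const,
    Finset.sum_mul, Finset.mul_sum]
  exact Finset.sum_congr rfl fun x0 _ => Finset.sum_congr rfl fun x1 _ => Finset.sum_congr rfl fun x2 _ => Finset.sum_congr rfl fun x3 _ => by ring

lemma Wval3 {d : ℕ} (A B C D : Mat d) :
    W ![A,B,C,D] q3 = Matrix.trace D * Matrix.trace (B * C) * Matrix.trace A := by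
  rw [W, sum_pi4_0123]
  simp only [Matrix.trace, Matrix.diag, Matrix.mul_apply, Fin.prod_univ_four, pm_apply, q3,
    Matrix.cons_val', Matrix.cons_val_zero, Matrix.cons_val_one, Matrix.head_cons,
    Matrix.cons_val_two, Matrix.tail_cons, Matrix.cons_val_three, Matrix.head_fin_const,
    Finset.sum_mul, Finset.mul_sum]
  exact Finset.sum_congr rfl fun x0 _ => Finset.sum_congr rfl fun x1 _ => Finset.sum_congr rfl fun x2 _ => Finset.sum_congr rfl fun x3 _ => by ring

lemma Wval4 {d : ℕ} (A B C D : Mat d) :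
    W ![A,B,C,D] q4 = Matrix.trace (B * (C * D)) * Matrix.trace A := by
  rw [W, sum_pi4_0123]
  simp only [Matrix.trace, Matrix.diag, Matrix.mul_apply, Fin.prod_univ_four, pm_apply, q4,
    Matrix.cons_val', Matrix.cons_val_zero, Matrix.cons_val_one, Matrix.head_cons,
    Matrix.cons_val_two, Matrix.tail_cons, Matrix.cons_val_three, Matrix.head_fin_const,
    Finset.sum_mul, Finset.mul_sum]
  exact Finset.sum_congr rfl fun x0 _ => Finset.sum_congr rfl fun x1 _ => Finset.sum_congr rfl fun x2 _ => Finset.sum_congr rfl fun x3 _ => by ring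

lemma Wval5 {d : ℕ} (A B C D : Mat d) :
    W ![A,B,C,D] q5 = Matrix.trace (B * (D * C)) * Matrix.trace A := by
  rw [W, sum_pi4_0132]
  simp only [Matrix.trace, Matrix.diag, Matrix.mul_apply, Fin.prod_univ_four, pm_apply, q5,
    Matrix.cons_val', Matrix.cons_val_zero, Matrix.cons_val_one, Matrix.head_cons,
    Matrix.cons_val_two, Matrix.tail_cons, Matrix.cons_val_three, Matrix.head_fin_const,
    Finset.sum_mul, Finset.mul_sum]
  exact Finset.sum_congr rfl fun x0 _ => Finset.sum_congr rfl fun x1 _ => Finset.sum_congr rfl fun x3 _ => Finset.sum_congr rfl fun x2 _ => by ring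

lemma Wval6 {d : ℕ} (A B C D : Mat d) :
    W ![A,B,C,D] q6 = Matrix.trace C * Matrix.trace (B * D) * Matrix.trace A := by
  rw [W, sum_pi4_0132]
  simp only [Matrix.trace, Matrix.diag, Matrix.mul_apply, Fin.prod_univ_four, pm_apply, q6,
    Matrix.cons_val', Matrix.cons_val_zero, Matrix.cons_val_one, Matrix.head_cons,
    Matrix.cons_val_two, Matrix.tail_cons, Matrix.cons_val_three, Matrix.head_fin_const,
    Finset.sum_mul, Finset.mul_sum]
  exact Finset.sum_congr rfl fun x0 _ => Finset.sum_congr rfl fun x1 _ => Finset.sum_congr rfl fun x3 _ => Finset.sum_congr rfl fun x2 _ => by ring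

lemma Wval7 {d : ℕ} (A B C D : Mat d) :
    W ![A,B,C,D] q7 = Matrix.trace D * Matrix.trace C * Matrix.trace (A * B) := by
  rw [W, sum_pi4_0123]
  simp only [Matrix.trace, Matrix.diag, Matrix.mul_apply, Fin.prod_univ_four, pm_apply, q7,
    Matrix.cons_val', Matrix.cons_val_zero, Matrix.cons_val_one, Matrix.head_cons,
    Matrix.cons_val_two, Matrix.tail_cons, Matrix.cons_val_three, Matrix.head_fin_const,
    Finset.sum_mul, Finset.mul_sum]
  exact Finset.sum_congr rfl fun x0 _ => Finset.sum_congr rfl fun x1 _ => Finset.sum_congr rfl fun x2 _ => Finset.sum_congr rfl fun x3 _ => by ring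

lemma Wval8 {d : ℕ} (A B C D : Mat d) :
    W ![A,B,C,D] q8 = Matrix.trace (C * D) * Matrix.trace (A * B) := by
  rw [W, sum_pi4_0123]
  simp only [Matrix.trace, Matrix.diag, Matrix.mul_apply, Fin.prod_univ_four, pm_apply, q8,
    Matrix.cons_val', Matrix.cons_val_zero, Matrix.cons_val_one, Matrix.head_cons,
    Matrix.cons_val_two, Matrix.tail_cons, Matrix.cons_val_three, Matrix.head_fin_const,
    Finset.sum_mul, Finset.mul_sum]
  exact Finset.sum_congr rfl fun x0 _ => Finset.sum_congr rfl fun x1 _ => Finset.sum_congr rfl fun x2 _ => Finset.sum_congr rfl fun x3 _ => by ring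

lemma Wval9 {d : ℕ} (A B C D : Mat d) :
    W ![A,B,C,D] q9 = Matrix.trace D * Matrix.trace (A * (B * C)) := by
  rw [W, sum_pi4_0123]
  simp only [Matrix.trace, Matrix.diag, Matrix.mul_apply, Fin.prod_univ_four, pm_apply, q9,
    Matrix.cons_val', Matrix.cons_val_zero, Matrix.cons_val_one, Matrix.head_cons,
    Matrix.cons_val_two, Matrix.tail_cons, Matrix.cons_val_three, Matrix.head_fin_const,
    Finset.sum_mul, Finset.mul_sum]
  exact Finset.sum_congr rfl fun x0 _ => Finset.sum_congr rfl fun x1 _ => Finset.sum_congr rfl fun x2 _ => Finset.sum_congr rfl fun x3 _ => by ring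

lemma Wval10 {d : ℕ} (A B C D : Mat d) :
    W ![A,B,C,D] q10 = Matrix.trace (A * (B * (C * D))) := by
  rw [W, sum_pi4_0123]
  simp only [Matrix.trace, Matrix.diag, Matrix.mul_apply, Fin.prod_univ_four, pm_apply, q10,
    Matrix.cons_val', Matrix.cons_val_zero, Matrix.cons_val_one, Matrix.head_cons,
    Matrix.cons_val_two, Matrix.tail_cons, Matrix.cons_val_three, Matrix.head_fin_const,
    Finset.sum_mul, Finset.mul_sum]
  exact Finset.sum_congr rfl fun x0 _ => Finset.sum_congr rfl fun x1 _ => Finset.sum_congr rfl fun x2 _ => Finset.sum_congr rfl fun x3 _ => by ring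

lemma Wval11 {d : ℕ} (A B C D : Mat d) :
    W ![A,B,C,D] q11 = Matrix.trace (A * (B * (D * C))) := by
  rw [W, sum_pi4_0132]
  simp only [Matrix.trace, Matrix.diag, Matrix.mul_apply, Fin.prod_univ_four, pm_apply, q11,
    Matrix.cons_val', Matrix.cons_val_zero, Matrix.cons_val_one, Matrix.head_cons,
    Matrix.cons_val_two, Matrix.tail_cons, Matrix.cons_val_three, Matrix.head_fin_const,
    Finset.sum_mul, Finset.mul_sum]
  exact Finset.sum_congr rfl fun x0 _ => Finset.sum_congr rfl fun x1 _ => Finset.sum_congr rfl fun x3 _ => Finset.sum_congr rfl fun x2 _ => by ring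

lemma Wval12 {d : ℕ} (A B C D : Mat d) :
    W ![A,B,C,D] q12 = Matrix.trace C * Matrix.trace (A * (B * D)) := by
  rw [W, sum_pi4_0132]
  simp only [Matrix.trace, Matrix.diag, Matrix.mul_apply, Fin.prod_univ_four, pm_apply, q12,
    Matrix.cons_val', Matrix.cons_val_zero, Matrix.cons_val_one, Matrix.head_cons,
    Matrix.cons_val_two, Matrix.tail_cons, Matrix.cons_val_three, Matrix.head_fin_const,
    Finset.sum_mul, Finset.mul_sum]
  exact Finset.sum_congr rfl fun x0 _ => Finset.sum_congr rfl fun x1 _ => Finset.sum_congr rfl fun x3 _ => Finset.sum_congr rfl fun x2 _ => by ring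

lemma Wval13 {d : ℕ} (A B C D : Mat d) :
    W ![A,B,C,D] q13 = Matrix.trace D * Matrix.trace (A * (C * B)) := by
  rw [W, sum_pi4_0213]
  simp only [Matrix.trace, Matrix.diag, Matrix.mul_apply, Fin.prod_univ_four, pm_apply, q13,
    Matrix.cons_val', Matrix.cons_val_zero, Matrix.cons_val_one, Matrix.head_cons,
    Matrix.cons_val_two, Matrix.tail_cons, Matrix.cons_val_three, Matrix.head_fin_const,
    Finset.sum_mul, Finset.mul_sum]
  exact Finset.sum_congr rfl fun x0 _ => Finset.sum_congr rfl fun x2 _ => Finset.sum_congr rfl fun x1 _ => Finset.sum_congr rfl fun x3 _ => by ring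

lemma Wval14 {d : ℕ} (A B C D : Mat d) :
    W ![A,B,C,D] q14 = Matrix.trace (A * (C * (D * B))) := by
  rw [W, sum_pi4_0231]
  simp only [Matrix.trace, Matrix.diag, Matrix.mul_apply, Fin.prod_univ_four, pm_apply, q14,
    Matrix.cons_val', Matrix.cons_val_zero, Matrix.cons_val_one, Matrix.head_cons,
    Matrix.cons_val_two, Matrix.tail_cons, Matrix.cons_val_three, Matrix.head_fin_const,
    Finset.sum_mul, Finset.mul_sum]
  exact Finset.sum_congr rfl fun x0 _ => Finset.sum_congr rfl fun x2 _ => Finset.sum_congr rfl fun x3 _ => Finset.sum_congr rfl fun x1 _ => by ring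

lemma Wval15 {d : ℕ} (A B C D : Mat d) :
    W ![A,B,C,D] q15 = Matrix.trace D * Matrix.trace B * Matrix.trace (A * C) := by
  rw [W, sum_pi4_0213]
  simp only [Matrix.trace, Matrix.diag, Matrix.mul_apply, Fin.prod_univ_four, pm_apply, q15,
    Matrix.cons_val', Matrix.cons_val_zero, Matrix.cons_val_one, Matrix.head_cons,
    Matrix.cons_val_two, Matrix.tail_cons, Matrix.cons_val_three, Matrix.head_fin_const,
    Finset.sum_mul, Finset.mul_sum]
  exact Finset.sum_congr rfl fun x0 _ => Finset.sum_congr rfl fun x2 _ => Finset.sum_congr rfl fun x1 _ => Finset.sum_congr rfl fun x3 _ => by ring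

lemma Wval16 {d : ℕ} (A B C D : Mat d) :
    W ![A,B,C,D] q16 = Matrix.trace B * Matrix.trace (A * (C * D)) := by
  rw [W, sum_pi4_0231]
  simp only [Matrix.trace, Matrix.diag, Matrix.mul_apply, Fin.prod_univ_four, pm_apply, q16,
    Matrix.cons_val', Matrix.cons_val_zero, Matrix.cons_val_one, Matrix.head_cons,
    Matrix.cons_val_two, Matrix.tail_cons, Matrix.cons_val_three, Matrix.head_fin_const,
    Finset.sum_mul, Finset.mul_sum]
  exact Finset.sum_congr rfl fun x0 _ => Finset.sum_congr rfl fun x2 _ => Finset.sum_congr rfl fun x3 _ => Finset.sum_congr rfl fun x1 _ => by ring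

lemma Wval17 {d : ℕ} (A B C D : Mat d) :
    W ![A,B,C,D] q17 = Matrix.trace (B * D) * Matrix.trace (A * C) := by
  rw [W, sum_pi4_0213]
  simp only [Matrix.trace, Matrix.diag, Matrix.mul_apply, Fin.prod_univ_four, pm_apply, q17,
    Matrix.cons_val', Matrix.cons_val_zero, Matrix.cons_val_one, Matrix.head_cons,
    Matrix.cons_val_two, Matrix.tail_cons, Matrix.cons_val_three, Matrix.head_fin_const,
    Finset.sum_mul, Finset.mul_sum]
  exact Finset.sum_congr rfl fun x0 _ => Finset.sum_congr rfl fun x2 _ => Finset.sum_congr rfl fun x1 _ => Finset.sum_congr rfl fun x3 _ => by ring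

lemma Wval18 {d : ℕ} (A B C D : Mat d) :
    W ![A,B,C,D] q18 = Matrix.trace (A * (C * (B * D))) := by
  rw [W, sum_pi4_0213]
  simp only [Matrix.trace, Matrix.diag, Matrix.mul_apply, Fin.prod_univ_four, pm_apply, q18,
    Matrix.cons_val', Matrix.cons_val_zero, Matrix.cons_val_one, Matrix.head_cons,
    Matrix.cons_val_two, Matrix.tail_cons, Matrix.cons_val_three, Matrix.head_fin_const,
    Finset.sum_mul, Finset.mul_sum]
  exact Finset.sum_congr rfl fun x0 _ => Finset.sum_congr rfl fun x2 _ => Finset.sum_congr rfl fun x1 _ => Finset.sum_congr rfl fun x3 _ => by ring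

lemma Wval19 {d : ℕ} (A B C D : Mat d) :
    W ![A,B,C,D] q19 = Matrix.trace (A * (D * (C * B))) := by
  rw [W, sum_pi4_0321]
  simp only [Matrix.trace, Matrix.diag, Matrix.mul_apply, Fin.prod_univ_four, pm_apply, q19,
    Matrix.cons_val', Matrix.cons_val_zero, Matrix.cons_val_one, Matrix.head_cons,
    Matrix.cons_val_two, Matrix.tail_cons, Matrix.cons_val_three, Matrix.head_fin_const,
    Finset.sum_mul, Finset.mul_sum]
  exact Finset.sum_congr rfl fun x0 _ => Finset.sum_congr rfl fun x3 _ => Finset.sum_congr rfl fun x2 _ => Finset.sum_congr rfl fun x1 _ => by ring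

lemma Wval20 {d : ℕ} (A B C D : Mat d) :
    W ![A,B,C,D] q20 = Matrix.trace C * Matrix.trace (A * (D * B)) := by
  rw [W, sum_pi4_0312]
  simp only [Matrix.trace, Matrix.diag, Matrix.mul_apply, Fin.prod_univ_four, pm_apply, q20,
    Matrix.cons_val', Matrix.cons_val_zero, Matrix.cons_val_one, Matrix.head_cons,
    Matrix.cons_val_two, Matrix.tail_cons, Matrix.cons_val_three, Matrix.head_fin_const,
    Finset.sum_mul, Finset.mul_sum]
  exact Finset.sum_congr rfl fun x0 _ => Finset.sum_congr rfl fun x3 _ => Finset.sum_congr rfl fun x1 _ => Finset.sum_congr rfl fun x2 _ => by ring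

lemma Wval21 {d : ℕ} (A B C D : Mat d) :
    W ![A,B,C,D] q21 = Matrix.trace B * Matrix.trace (A * (D * C)) := by
  rw [W, sum_pi4_0321]
  simp only [Matrix.trace, Matrix.diag, Matrix.mul_apply, Fin.prod_univ_four, pm_apply, q21,
    Matrix.cons_val', Matrix.cons_val_zero, Matrix.cons_val_one, Matrix.head_cons,
    Matrix.cons_val_two, Matrix.tail_cons, Matrix.cons_val_three, Matrix.head_fin_const,
    Finset.sum_mul, Finset.mul_sum]
  exact Finset.sum_congr rfl fun x0 _ => Finset.sum_congr rfl fun x3 _ => Finset.sum_congr rfl fun x2 _ => Finset.sum_congr rfl fun x1 _ => by ring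

lemma Wval22 {d : ℕ} (A B C D : Mat d) :
    W ![A,B,C,D] q22 = Matrix.trace C * Matrix.trace B * Matrix.trace (A * D) := by
  rw [W, sum_pi4_0312]
  simp only [Matrix.trace, Matrix.diag, Matrix.mul_apply, Fin.prod_univ_four, pm_apply, q22,
    Matrix.cons_val', Matrix.cons_val_zero, Matrix.cons_val_one, Matrix.head_cons,
    Matrix.cons_val_two, Matrix.tail_cons, Matrix.cons_val_three, Matrix.head_fin_const,
    Finset.sum_mul, Finset.mul_sum]
  exact Finset.sum_congr rfl fun x0 _ => Finset.sum_congr rfl fun x3 _ => Finset.sum_congr rfl fun x1 _ => Finset.sum_congr rfl fun x2 _ => by ring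

lemma Wval23 {d : ℕ} (A B C D : Mat d) :
    W ![A,B,C,D] q23 = Matrix.trace (A * (D * (B * C))) := by
  rw [W, sum_pi4_0312]
  simp only [Matrix.trace, Matrix.diag, Matrix.mul_apply, Fin.prod_univ_four, pm_apply, q23,
    Matrix.cons_val', Matrix.cons_val_zero, Matrix.cons_val_one, Matrix.head_cons,
    Matrix.cons_val_two, Matrix.tail_cons, Matrix.cons_val_three, Matrix.head_fin_const,
    Finset.sum_mul, Finset.mul_sum]
  exact Finset.sum_congr rfl fun x0 _ => Finset.sum_congr rfl fun x3 _ => Finset.sum_congr rfl fun x1 _ => Finset.sum_congr rfl fun x2 _ => by ring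

lemma Wval24 {d : ℕ} (A B C D : Mat d) :
    W ![A,B,C,D] q24 = Matrix.trace (B * C) * Matrix.trace (A * D) := by
  rw [W, sum_pi4_0312]
  simp only [Matrix.trace, Matrix.diag, Matrix.mul_apply, Fin.prod_univ_four, pm_apply, q24,
    Matrix.cons_val', Matrix.cons_val_zero, Matrix.cons_val_one, Matrix.head_cons,
    Matrix.cons_val_two, Matrix.tail_cons, Matrix.cons_val_three, Matrix.head_fin_const,
    Finset.sum_mul, Finset.mul_sum]
  exact Finset.sum_congr rfl fun x0 _ => Finset.sum_congr rfl fun x3 _ => Finset.sum_congr rfl fun x1 _ => Finset.sum_congr rfl fun x2 _ => by ring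


lemma Fperms_injective : Function.Injective Fperms := by
  have h : Function.Injective (fun i => (Fperms i 0, Fperms i 1, Fperms i 2, Fperms i 3)) := by
    decide
  intro i j hij
  apply h
  simp only [hij]

lemma Fperms_bijective : Function.Bijective Fperms := by
  rw [Fintype.bijective_iff_injective_and_card]
  refine ⟨Fperms_injective, ?_⟩
  simp [Fintype.card_perm, Nat.factorial]

lemma sum_perm_eq {d : ℕ} (f : Fin 4 → Mat d) :
    ∑ π : Equiv.Perm (Fin 4), W f π = ∑ i : Fin 24, W f (Fperms i) :=
  (Fintype.sum_bijective Fperms Fperms_bijective _ _ fun _ => rfl).symm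

lemma trace_mten_tpow {d : ℕ} (f : Fin 4 → Mat d) (A : Mat d) :
    (mten f * tpow4 A).trace = ∏ i, (f i * A).trace := by
  have h1 : (mten f * tpow4 A).trace
      = ∑ a : Fin 4 → Fin d, ∑ b : Fin 4 → Fin d,
          ∏ i, (f i (a i) (b i) * A (b i) (a i)) := by
    simp [Matrix.trace, Matrix.diag, Matrix.mul_apply, mten, tpow4, Finset.prod_mul_distrib]
  have h2 : ∀ i : Fin 4, (f i * A).trace = ∑ z : Fin d × Fin d, f i z.1 z.2 * A z.2 z.1 := by
    intro i
    rw [Fintype.sum_prod_type]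
    simp [Matrix.trace, Matrix.diag, Matrix.mul_apply]
  rw [h1, Finset.prod_congr rfl fun i _ => h2 i, Finset.prod_univ_sum, Fintype.piFinset_univ]
  rw [show (∑ a : Fin 4 → Fin d, ∑ b : Fin 4 → Fin d,
        ∏ i, f i (a i) (b i) * A (b i) (a i))
      = ∑ pr : ((Fin 4 → Fin d) × (Fin 4 → Fin d)),
          ∏ i, f i (pr.1 i) (pr.2 i) * A (pr.2 i) (pr.1 i) from
    (Fintype.sum_prod_type (f := fun pr : ((Fin 4 → Fin d) × (Fin 4 → Fin d)) =>
      ∏ i, f i (pr.1 i) (pr.2 i) * A (pr.2 i) (pr.1 i))).symm]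
  exact Fintype.sum_equiv ((Equiv.arrowProdEquivProdArrow (Fin 4) (fun _ => Fin d) (fun _ => Fin d)).symm) _ _
    (fun pr => rfl)

lemma trace_mten_permOp {d : ℕ} (f : Fin 4 → Mat d) (π : Equiv.Perm (Fin 4)) :
    (mten f * permOp d π).trace = W f π⁻¹ := by
  have key : ∀ a b : Fin 4 → Fin d, (∀ i, b (π i) = a i) ↔ b = fun j => a (π⁻¹ j) := by
    intro a b
    constructor
    · intro h; funext j
      have := h (π⁻¹ j); simpa using this
    · rintro rfl i; simp
  simp only [Matrix.trace, Matrix.diag, Matrix.mul_apply, mten, permOp, W]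
  refine Finset.sum_congr rfl fun a _ => ?_
  rw [Finset.sum_eq_single (fun j => a (π⁻¹ j))]
  · rw [if_pos ((key a _).2 rfl), mul_one]
  · intro b _ hb
    rw [if_neg, mul_zero]
    rw [key a b]; exact hb
  · intro h; exact absurd (Finset.mem_univ _) h

lemma sum_trace_permOp {d : ℕ} (f : Fin 4 → Mat d) :
    ∑ π : Equiv.Perm (Fin 4), (mten f * permOp d π).trace
      = ∑ π : Equiv.Perm (Fin 4), W f π := by
  simp only [trace_mten_permOp]
  exact Fintype.sum_bijective (fun π : Equiv.Perm (Fin 4) => π⁻¹)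
    (Function.bijective_iff_has_inverse.2 ⟨fun π => π⁻¹, fun _ => inv_inv _, fun _ => inv_inv _⟩)
    _ _ (fun _ => rfl)

lemma design_sum {d n : ℕ} (p : Fin n → ℝ) (P : Fin n → Mat d)
    (hdesign : ∑ k, (p k : ℂ) • tpow4 (P k)
      = (1 / ((d : ℂ) * (d + 1) * (d + 2) * (d + 3))) • ∑ π : Equiv.Perm (Fin 4), permOp d π)
    (f : Fin 4 → Mat d) :
    ∑ k, (p k : ℂ) * ∏ i, (f i * P k).trace
      = (1 / ((d : ℂ) * (d + 1) * (d + 2) * (d + 3))) * ∑ π : Equiv.Perm (Fin 4), W f π := by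
  have h1 : (mten f * (∑ k, (p k : ℂ) • tpow4 (P k))).trace
      = ∑ k, (p k : ℂ) * ∏ i, (f i * P k).trace := by
    rw [Matrix.mul_sum, Matrix.trace_sum]
    simp [Matrix.mul_smul, Matrix.trace_smul, trace_mten_tpow, smul_eq_mul]
  have h2 : (mten f * ((1 / ((d : ℂ) * (d + 1) * (d + 2) * (d + 3))) •
        ∑ π : Equiv.Perm (Fin 4), permOp d π)).trace
      = (1 / ((d : ℂ) * (d + 1) * (d + 2) * (d + 3))) * ∑ π : Equiv.Perm (Fin 4), W f π := by
    rw [Matrix.mul_smul, Matrix.trace_smul, Matrix.mul_sum, Matrix.trace_sum, smul_eq_mul,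
      sum_trace_permOp]
  rw [← h1, ← h2, hdesign]

lemma conj_mul {d : ℕ} {A : Mat d} (hA : A.IsHermitian) (B C : Mat d) :
    ((hA.eigenvectorUnitary : Mat d) * B * star (hA.eigenvectorUnitary : Mat d)) *
      ((hA.eigenvectorUnitary : Mat d) * C * star (hA.eigenvectorUnitary : Mat d))
    = (hA.eigenvectorUnitary : Mat d) * (B * C) * star (hA.eigenvectorUnitary : Mat d) := by
  have hUU : star (hA.eigenvectorUnitary : Mat d) * (hA.eigenvectorUnitary : Mat d) = 1 :=
    Matrix.mem_unitaryGroup_iff'.mp hA.eigenvectorUnitary.2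
  calc ((hA.eigenvectorUnitary : Mat d) * B * star (hA.eigenvectorUnitary : Mat d)) *
      ((hA.eigenvectorUnitary : Mat d) * C * star (hA.eigenvectorUnitary : Mat d))
      = (hA.eigenvectorUnitary : Mat d) *
        (B * ((star (hA.eigenvectorUnitary : Mat d) * (hA.eigenvectorUnitary : Mat d)) *
          (C * star (hA.eigenvectorUnitary : Mat d)))) := by
        simp only [mul_assoc]
    _ = _ := by rw [hUU, one_mul]; simp only [mul_assoc]

lemma conj_trace {d : ℕ} {A : Mat d} (hA : A.IsHermitian) (B : Mat d) :
    ((hA.eigenvectorUnitary : Mat d) * B * star (hA.eigenvectorUnitary : Mat d)).trace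
      = B.trace := by
  have hUU : star (hA.eigenvectorUnitary : Mat d) * (hA.eigenvectorUnitary : Mat d) = 1 :=
    Matrix.mem_unitaryGroup_iff'.mp hA.eigenvectorUnitary.2
  rw [Matrix.trace_mul_cycle, hUU, one_mul]

lemma trace_sq_eq {d : ℕ} {A : Mat d} (hA : A.IsHermitian) :
    (A * A).trace = ((∑ i, hA.eigenvalues i ^ 2 : ℝ) : ℂ) := by
  have h2 : A * A = (hA.eigenvectorUnitary : Mat d) *
      (Matrix.diagonal (RCLike.ofReal ∘ hA.eigenvalues) *
        Matrix.diagonal (RCLike.ofReal ∘ hA.eigenvalues)) *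
      star (hA.eigenvectorUnitary : Mat d) := by
    rw [← conj_mul hA, ← Unitary.conjStarAlgAut_apply (S := ℂ) (u := hA.eigenvectorUnitary), ← hA.spectral_theorem]
  rw [h2, conj_trace hA, Matrix.diagonal_mul_diagonal, Matrix.trace_diagonal]
  push_cast
  exact Finset.sum_congr rfl fun i _ => by simp [Function.comp]; ring

lemma trace_pow4_eq {d : ℕ} {A : Mat d} (hA : A.IsHermitian) :
    (A * (A * (A * A))).trace = ((∑ i, hA.eigenvalues i ^ 4 : ℝ) : ℂ) := by
  have h2 : A * (A * (A * A)) = (hA.eigenvectorUnitary : Mat d) *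
      (Matrix.diagonal (RCLike.ofReal ∘ hA.eigenvalues) *
        (Matrix.diagonal (RCLike.ofReal ∘ hA.eigenvalues) *
          (Matrix.diagonal (RCLike.ofReal ∘ hA.eigenvalues) *
            Matrix.diagonal (RCLike.ofReal ∘ hA.eigenvalues)))) *
      star (hA.eigenvectorUnitary : Mat d) := by
    rw [← conj_mul hA, ← conj_mul hA, ← conj_mul hA, ← Unitary.conjStarAlgAut_apply (S := ℂ) (u := hA.eigenvectorUnitary), ← hA.spectral_theorem]
  rw [h2, conj_trace hA, Matrix.diagonal_mul_diagonal, Matrix.diagonal_mul_diagonal,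
    Matrix.diagonal_mul_diagonal, Matrix.trace_diagonal]
  push_cast
  exact Finset.sum_congr rfl fun i _ => by simp [Function.comp]; ring

lemma trace_real {d : ℕ} {A : Mat d} (hA : A.IsHermitian) (B : Mat d) (hB : B.IsHermitian) :
    (A * B).trace = (((A * B).trace.re : ℝ) : ℂ) := by
  have h : (starRingEnd ℂ) (A * B).trace = (A * B).trace := by
    rw [show (starRingEnd ℂ) (A * B).trace = star (A * B).trace from rfl,
      ← Matrix.trace_conjTranspose, Matrix.conjTranspose_mul, hA.eq, hB.eq,
      Matrix.trace_mul_comm]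
  exact (Complex.conj_eq_iff_re.mp h).symm

lemma sumW_2design {d : ℕ} (ξ : Mat d) (h0 : ξ.trace = 0) :
    ∑ π : Equiv.Perm (Fin 4), W ![ξ, ξ, (1 : Mat d), 1] π
      = ((d : ℂ)^2 + 5*(d : ℂ) + 6) * (ξ * ξ).trace := by
  rw [sum_perm_eq]
  simp only [Fin.sum_univ_succ, Fin.sum_univ_zero, Fperms, Matrix.cons_val_zero,
    Matrix.cons_val_succ, Wval1, Wval2, Wval3, Wval4, Wval5, Wval6, Wval7, Wval8, Wval9,
    Wval10, Wval11, Wval12, Wval13, Wval14, Wval15, Wval16, Wval17, Wval18, Wval19, Wval20,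
    Wval21, Wval22, Wval23, Wval24, one_mul, mul_one, Matrix.trace_one, h0,
    Fintype.card_fin, mul_zero, zero_mul, add_zero, zero_add]
  ring

lemma sumW_4design {d : ℕ} (ξ : Mat d) (h0 : ξ.trace = 0) :
    ∑ π : Equiv.Perm (Fin 4), W ![ξ, ξ, ξ, ξ] π
      = 3 * ((ξ * ξ).trace)^2 + 6 * (ξ * (ξ * (ξ * ξ))).trace := by
  rw [sum_perm_eq]
  simp only [Fin.sum_univ_succ, Fin.sum_univ_zero, Fperms, Matrix.cons_val_zero,
    Matrix.cons_val_succ, Wval1, Wval2, Wval3, Wval4, Wval5, Wval6, Wval7, Wval8, Wval9,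
    Wval10, Wval11, Wval12, Wval13, Wval14, Wval15, Wval16, Wval17, Wval18, Wval19, Wval20,
    Wval21, Wval22, Wval23, Wval24, one_mul, mul_one, Matrix.trace_one, h0,
    Fintype.card_fin, mul_zero, zero_mul, add_zero, zero_add]
  ring

end FourDesignAux

namespace FourDesignAux

lemma moments {d n : ℕ} (hd : 0 < d) (p : Fin n → ℝ)
    (P : Fin n → Matrix (Fin d) (Fin d) ℂ)
    (hherm : ∀ k, (P k).IsHermitian)
    (hrank1 : ∀ k, (P k).trace = 1)
    (hdesign : ∑ k, (p k : ℂ) • tpow4 (P k)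
      = (1 / ((d : ℂ) * (d + 1) * (d + 2) * (d + 3))) • ∑ π : Equiv.Perm (Fin 4), permOp d π)
    (ξ : Mat d) (hξ : ξ.IsHermitian) (h0 : ξ.trace = 0) :
    (∑ k, p k * (((ξ * P k).trace).re)^2) * ((d:ℝ)*((d:ℝ)+1)*((d:ℝ)+2)*((d:ℝ)+3))
        = ((d:ℝ)^2 + 5*(d:ℝ) + 6) * (∑ i, hξ.eigenvalues i ^ 2)
      ∧ (∑ k, p k * (((ξ * P k).trace).re)^4) * ((d:ℝ)*((d:ℝ)+1)*((d:ℝ)+2)*((d:ℝ)+3))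
        = 3 * (∑ i, hξ.eigenvalues i ^ 2)^2 + 6 * (∑ i, hξ.eigenvalues i ^ 4) := by
  have hDr : (0:ℝ) < (d:ℝ)*((d:ℝ)+1)*((d:ℝ)+2)*((d:ℝ)+3) := by
    have hd0 : (0:ℝ) < (d:ℝ) := Nat.cast_pos.2 hd
    have h1 : (0:ℝ) < (d:ℝ)+1 := by linarith
    have h2 : (0:ℝ) < (d:ℝ)+2 := by linarith
    have h3 : (0:ℝ) < (d:ℝ)+3 := by linarith
    exact mul_pos (mul_pos (mul_pos hd0 h1) h2) h3
  have hDc : ((d:ℂ)*((d:ℂ)+1)*((d:ℂ)+2)*((d:ℂ)+3)) ≠ 0 := by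
    rw [show ((d:ℂ)*((d:ℂ)+1)*((d:ℂ)+2)*((d:ℂ)+3))
        = (((d:ℝ)*((d:ℝ)+1)*((d:ℝ)+2)*((d:ℝ)+3) : ℝ) : ℂ) by push_cast; ring]
    exact Complex.ofReal_ne_zero.2 hDr.ne'
  have e2 := design_sum p P hdesign ![ξ, ξ, 1, 1]
  simp only [Fin.prod_univ_four, Matrix.cons_val_zero, Matrix.cons_val_one, Matrix.head_cons,
    Matrix.cons_val_two, Matrix.tail_cons, Matrix.cons_val_three, Matrix.head_fin_const,
    one_mul, hrank1, mul_one] at e2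
  rw [sumW_2design ξ h0] at e2
  have e4 := design_sum p P hdesign ![ξ, ξ, ξ, ξ]
  simp only [Fin.prod_univ_four, Matrix.cons_val_zero, Matrix.cons_val_one, Matrix.head_cons,
    Matrix.cons_val_two, Matrix.tail_cons, Matrix.cons_val_three, Matrix.head_fin_const] at e4
  rw [sumW_4design ξ h0] at e4
  have cast2 : ((∑ k, p k * (((ξ * P k).trace).re)^2 : ℝ) : ℂ)
      = ∑ k, (p k : ℂ) * ((ξ * P k).trace * (ξ * P k).trace) := by
    push_cast
    refine Finset.sum_congr rfl fun k _ => ?_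
    rw [← trace_real hξ (P k) (hherm k)]
    push_cast
    ring
  have cast4 : ((∑ k, p k * (((ξ * P k).trace).re)^4 : ℝ) : ℂ)
      = ∑ k, (p k : ℂ) * ((ξ * P k).trace * (ξ * P k).trace * (ξ * P k).trace
          * (ξ * P k).trace) := by
    push_cast
    refine Finset.sum_congr rfl fun k _ => ?_
    rw [← trace_real hξ (P k) (hherm k)]
    push_cast
    ring
  constructor
  · apply Complex.ofReal_injective
    rw [Complex.ofReal_mul, cast2, e2, trace_sq_eq hξ]
    push_cast
    field_simp
  · apply Complex.ofReal_injective
    rw [Complex.ofReal_mul, cast4, e4, trace_sq_eq hξ, trace_pow4_eq hξ]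
    push_cast
    field_simp

end FourDesignAux

namespace FourDesignAux

lemma CS_aux {n : ℕ} (p : Fin n → ℝ) (hp : ∀ k, 0 ≤ p k) (v : Fin n → ℝ) :
    ((∑ k, p k * (v k)^2)^2 ≤ (∑ k, p k * |v k|) * (∑ k, p k * |v k|^3))
  ∧ ((∑ k, p k * |v k|^3)^2 ≤ (∑ k, p k * (v k)^2) * (∑ k, p k * (v k)^4)) := by
  constructor
  · have h := Finset.sum_mul_sq_le_sq_mul_sq Finset.univ
      (fun k => Real.sqrt (p k) * Real.sqrt |v k|)
      (fun k => Real.sqrt (p k) * (|v k| * Real.sqrt |v k|))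
    have h1 : ∀ k : Fin n, (Real.sqrt (p k) * Real.sqrt |v k|)
        * (Real.sqrt (p k) * (|v k| * Real.sqrt |v k|)) = p k * (v k)^2 := fun k => by
      have e : (Real.sqrt (p k) * Real.sqrt |v k|) * (Real.sqrt (p k) * (|v k| * Real.sqrt |v k|))
          = (Real.sqrt (p k) * Real.sqrt (p k)) * ((Real.sqrt |v k| * Real.sqrt |v k|) * |v k|) := by
        ring
      rw [e, Real.mul_self_sqrt (hp k), Real.mul_self_sqrt (abs_nonneg _), ← sq_abs]
      ring
    have h2 : ∀ k : Fin n, (Real.sqrt (p k) * Real.sqrt |v k|)^2 = p k * |v k| := fun k => by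
      rw [mul_pow, Real.sq_sqrt (hp k), Real.sq_sqrt (abs_nonneg _)]
    have h3 : ∀ k : Fin n, (Real.sqrt (p k) * (|v k| * Real.sqrt |v k|))^2 = p k * |v k|^3 :=
      fun k => by
        rw [mul_pow, mul_pow, Real.sq_sqrt (hp k), Real.sq_sqrt (abs_nonneg _)]
        ring
    rw [Finset.sum_congr rfl fun k _ => h1 k, Finset.sum_congr rfl fun k _ => h2 k,
      Finset.sum_congr rfl fun k _ => h3 k] at h
    exact h
  · have h := Finset.sum_mul_sq_le_sq_mul_sq Finset.univ
      (fun k => Real.sqrt (p k) * |v k|)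
      (fun k => Real.sqrt (p k) * (v k)^2)
    have h1 : ∀ k : Fin n, (Real.sqrt (p k) * |v k|) * (Real.sqrt (p k) * (v k)^2)
        = p k * |v k|^3 := fun k => by
      have e : (Real.sqrt (p k) * |v k|) * (Real.sqrt (p k) * (v k)^2)
          = (Real.sqrt (p k) * Real.sqrt (p k)) * (|v k| * (v k)^2) := by ring
      rw [e, Real.mul_self_sqrt (hp k), ← sq_abs]
      ring
    have h2 : ∀ k : Fin n, (Real.sqrt (p k) * |v k|)^2 = p k * (v k)^2 := fun k => by
      rw [mul_pow, Real.sq_sqrt (hp k), sq_abs]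
    have h3 : ∀ k : Fin n, (Real.sqrt (p k) * (v k)^2)^2 = p k * (v k)^4 := fun k => by
      rw [mul_pow, Real.sq_sqrt (hp k)]
      ring
    rw [Finset.sum_congr rfl fun k _ => h1 k, Finset.sum_congr rfl fun k _ => h2 k,
      Finset.sum_congr rfl fun k _ => h3 k] at h
    exact h

lemma final_bound {X m1 m2 m3 m4 t2 t4 : ℝ} (hX : 1 ≤ X)
    (hm1 : 0 ≤ m1) (hm2 : 0 ≤ m2) (hm4 : 0 ≤ m4) (ht2 : 0 ≤ t2) (ht4 : t4 ≤ t2^2)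
    (hCS1 : m2^2 ≤ m1 * m3) (hCS2 : m3^2 ≤ m2 * m4)
    (e2R : m2 * (X*(X+1)*(X+2)*(X+3)) = (X^2+5*X+6) * t2)
    (e4R : m4 * (X*(X+1)*(X+2)*(X+3)) = 3*t2^2 + 6*t4) :
    (1/3) * Real.sqrt t2 ≤ X * m1 := by
  rcases eq_or_lt_of_le ht2 with h|h
  · rw [← h, Real.sqrt_zero, mul_zero]
    exact mul_nonneg (by linarith) hm1
  · have hDr : 0 < X*(X+1)*(X+2)*(X+3) := by nlinarith
    have hm2pos : 0 < m2 := by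
      have hpos : 0 < m2 * (X*(X+1)*(X+2)*(X+3)) := by rw [e2R]; nlinarith
      rcases mul_pos_iff.mp hpos with ⟨h1, _⟩ | ⟨_, h2⟩
      · exact h1
      · linarith
    have a1 : (m2^2)^2 ≤ (m1*m3)^2 := pow_le_pow_left₀ (sq_nonneg m2) hCS1 2
    have a2 : m1^2 * m3^2 ≤ m1^2 * (m2*m4) := mul_le_mul_of_nonneg_left hCS2 (sq_nonneg m1)
    have h5 : m2^3 ≤ m1^2 * m4 := by nlinarith [a1, a2, hm2pos]
    have k1 : m2^3 * (X*(X+1)*(X+2)*(X+3))^3 ≤ (m1^2*m4) * (X*(X+1)*(X+2)*(X+3))^3 :=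
      mul_le_mul_of_nonneg_right h5 (by positivity)
    have hq : m4 * (X*(X+1)*(X+2)*(X+3)) ≤ 9*t2^2 := by linarith
    have k2 : ((X^2+5*X+6)*t2)^3 ≤ m1^2 * (9*t2^2) * (X*(X+1)*(X+2)*(X+3))^2 := by
      calc ((X^2+5*X+6)*t2)^3 = (m2*(X*(X+1)*(X+2)*(X+3)))^3 := by rw [e2R]
      _ = m2^3 * (X*(X+1)*(X+2)*(X+3))^3 := by ring
      _ ≤ (m1^2*m4) * (X*(X+1)*(X+2)*(X+3))^3 := k1
      _ = m1^2 * (m4 * (X*(X+1)*(X+2)*(X+3))) * (X*(X+1)*(X+2)*(X+3))^2 := by ring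
      _ ≤ m1^2 * (9*t2^2) * (X*(X+1)*(X+2)*(X+3))^2 :=
          mul_le_mul_of_nonneg_right (mul_le_mul_of_nonneg_left hq (sq_nonneg m1)) (sq_nonneg _)
    have k3 : (X+2)*(X+3)*t2 ≤ 9*m1^2*X^2*(X+1)^2 := by
      have hQ : 0 < t2^2*((X+2)^2*(X+3)^2) := by
        apply mul_pos (pow_pos h 2)
        positivity
      refine le_of_mul_le_mul_right ?_ hQ
      calc (X+2)*(X+3)*t2 * (t2^2*((X+2)^2*(X+3)^2)) = ((X^2+5*X+6)*t2)^3 := by ring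
      _ ≤ m1^2 * (9*t2^2) * (X*(X+1)*(X+2)*(X+3))^2 := k2
      _ = 9*m1^2*X^2*(X+1)^2 * (t2^2*((X+2)^2*(X+3)^2)) := by ring
    have k4 : t2 ≤ 9*X^2*m1^2 := by
      have hQ2 : (0:ℝ) < (X+1)^2 := by positivity
      refine le_of_mul_le_mul_right ?_ hQ2
      have hcmp : (X+1)^2 ≤ (X+2)*(X+3) := by nlinarith
      calc t2 * (X+1)^2 ≤ t2 * ((X+2)*(X+3)) := mul_le_mul_of_nonneg_left hcmp ht2
      _ = (X+2)*(X+3)*t2 := by ring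
      _ ≤ 9*m1^2*X^2*(X+1)^2 := k3
      _ = 9*X^2*m1^2 * (X+1)^2 := by ring
    have k5 : Real.sqrt t2 ≤ 3*X*m1 := by
      have hXm : (0:ℝ) ≤ 3*X*m1 := by
        have : (0:ℝ) ≤ X := by linarith
        positivity
      have h1 : Real.sqrt t2 ≤ Real.sqrt ((3*X*m1)^2) := Real.sqrt_le_sqrt (by nlinarith [k4])
      rwa [Real.sqrt_sq hXm] at h1
    linarith

lemma part2 {d : ℕ} (hd : 0 < d) (lam : Fin d → ℝ) :
    (1 / (3 * Real.sqrt d)) * (∑ i, |lam i|) ≤ (1/3) * Real.sqrt (∑ i, lam i ^ 2) := by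
  have hX : (1:ℝ) ≤ (d:ℝ) := by exact_mod_cast hd
  have hCS := Finset.sum_mul_sq_le_sq_mul_sq Finset.univ (fun _ : Fin d => (1:ℝ))
    (fun i => |lam i|)
  simp only [one_mul, mul_one, one_pow, Finset.sum_const, Finset.card_univ, Fintype.card_fin,
    nsmul_eq_mul, sq_abs] at hCS
  have hN0 : 0 ≤ ∑ i, |lam i| := Finset.sum_nonneg fun i _ => abs_nonneg _
  have hNle : (∑ i, |lam i|) ≤ Real.sqrt d * Real.sqrt (∑ i, lam i^2) := by
    rw [← Real.sqrt_mul (by positivity)]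
    have h2 := Real.sqrt_le_sqrt hCS
    rwa [Real.sqrt_sq hN0] at h2
  have hsX : 0 < Real.sqrt d := Real.sqrt_pos.2 (by linarith)
  rw [show (1/(3*Real.sqrt d)) * (∑ i, |lam i|) = (∑ i, |lam i|) / (3*Real.sqrt d) by ring]
  rw [div_le_iff₀ (by positivity)]
  calc (∑ i, |lam i|) ≤ Real.sqrt d * Real.sqrt (∑ i, lam i^2) := hNle
  _ = 1/3 * Real.sqrt (∑ i, lam i^2) * (3*Real.sqrt d) := by ring

end FourDesignAux

/-- For a weighted spherical 4-design POVM `M_k = d p_k P_k` and density operators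
`ρ, σ`: `Σ_k |Tr((ρ−σ)M_k)| ≥ (1/3)‖ρ−σ‖₂ ≥ (1/(3√d))‖ρ−σ‖₁`. -/
theorem four_design_povm_bias {d n : ℕ} (hd : 0 < d)
    (p : Fin n → ℝ) (hp : ∀ k, 0 ≤ p k) (hps : ∑ k, p k = 1)
    (P : Fin n → Matrix (Fin d) (Fin d) ℂ)
    (hherm : ∀ k, (P k).IsHermitian)
    (hidem : ∀ k, P k * P k = P k)
    (hrank1 : ∀ k, (P k).trace = 1)
    (hdesign : ∑ k, (p k : ℂ) • tpow4 (P k)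
      = (1 / ((d : ℂ) * (d + 1) * (d + 2) * (d + 3))) • ∑ π : Equiv.Perm (Fin 4), permOp d π)
    (ρ σ : Matrix (Fin d) (Fin d) ℂ) (hρ : ρ.PosSemidef) (hσ : σ.PosSemidef)
    (hρ1 : ρ.trace = 1) (hσ1 : σ.trace = 1) :
    ∑ k, ‖(((ρ - σ) * (((d : ℂ) * (p k : ℂ)) • P k)).trace)‖
        ≥ (1 / 3 : ℝ) * Real.sqrt ((((ρ - σ) * (ρ - σ)).trace).re)
      ∧ (1 / 3 : ℝ) * Real.sqrt ((((ρ - σ) * (ρ - σ)).trace).re)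
        ≥ (1 / (3 * Real.sqrt d)) * traceNorm (hρ.1.sub hσ.1) := by
  have hξ : (ρ - σ).IsHermitian := hρ.1.sub hσ.1
  have h0 : (ρ - σ).trace = 0 := by rw [Matrix.trace_sub, hρ1, hσ1, sub_self]
  obtain ⟨e2R, e4R⟩ := FourDesignAux.moments hd p P hherm hrank1 hdesign (ρ - σ) hξ h0
  obtain ⟨hCS1, hCS2⟩ := FourDesignAux.CS_aux p hp (fun k => ((ρ - σ) * P k).trace.re)
  have htr2 : (((ρ - σ) * (ρ - σ)).trace).re = ∑ i, hξ.eigenvalues i ^ 2 := by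
    rw [FourDesignAux.trace_sq_eq hξ, Complex.ofReal_re]
  have hterm : ∀ k, ‖(((ρ - σ) * (((d : ℂ) * (p k : ℂ)) • P k)).trace)‖
      = (d:ℝ) * (p k * |((ρ - σ) * P k).trace.re|) := by
    intro k
    rw [Matrix.mul_smul, Matrix.trace_smul, smul_eq_mul,
      FourDesignAux.trace_real hξ (P k) (hherm k)]
    rw [show (d:ℂ)*(p k:ℂ)*(((((ρ - σ) * P k).trace.re : ℝ)):ℂ)
        = (((d:ℝ) * (p k * ((ρ - σ) * P k).trace.re) : ℝ) : ℂ) by push_cast; ring]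
    rw [Complex.norm_real, Real.norm_eq_abs, abs_mul, abs_mul, Nat.abs_cast, abs_of_nonneg (hp k), Complex.ofReal_re]
  have hsum : ∑ k, ‖(((ρ - σ) * (((d : ℂ) * (p k : ℂ)) • P k)).trace)‖
      = (d:ℝ) * ∑ k, p k * |((ρ - σ) * P k).trace.re| := by
    rw [Finset.mul_sum]
    exact Finset.sum_congr rfl fun k _ => hterm k
  constructor
  · rw [ge_iff_le, hsum, htr2]
    have hm1 : 0 ≤ ∑ k, p k * |((ρ - σ) * P k).trace.re| :=
      Finset.sum_nonneg fun k _ => mul_nonneg (hp k) (abs_nonneg _)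
    have hm2 : 0 ≤ ∑ k, p k * (((ρ - σ) * P k).trace.re)^2 :=
      Finset.sum_nonneg fun k _ => mul_nonneg (hp k) (sq_nonneg _)
    have hm4 : 0 ≤ ∑ k, p k * (((ρ - σ) * P k).trace.re)^4 :=
      Finset.sum_nonneg fun k _ => mul_nonneg (hp k) (by positivity)
    have ht2 : 0 ≤ ∑ i, hξ.eigenvalues i^2 := Finset.sum_nonneg fun i _ => sq_nonneg _
    have ht4 : (∑ i, hξ.eigenvalues i^4) ≤ (∑ i, hξ.eigenvalues i^2)^2 := by
      have h1 : ∀ i : Fin d, hξ.eigenvalues i^4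
          ≤ hξ.eigenvalues i^2 * ∑ j, hξ.eigenvalues j^2 := fun i => by
        have h2 : hξ.eigenvalues i^2 ≤ ∑ j, hξ.eigenvalues j^2 :=
          Finset.single_le_sum (f := fun j => hξ.eigenvalues j ^ 2) (fun j _ => sq_nonneg _) (Finset.mem_univ i)
        nlinarith [sq_nonneg (hξ.eigenvalues i)]
      calc (∑ i, hξ.eigenvalues i^4)
          ≤ ∑ i, hξ.eigenvalues i^2 * ∑ j, hξ.eigenvalues j^2 :=
            Finset.sum_le_sum fun i _ => h1 i
      _ = (∑ i, hξ.eigenvalues i^2)^2 := by rw [← Finset.sum_mul]; ring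
    have hX : (1:ℝ) ≤ (d:ℝ) := by exact_mod_cast hd
    exact FourDesignAux.final_bound hX hm1 hm2 hm4 ht2 ht4 hCS1 hCS2 e2R e4R
  · rw [ge_iff_le, htr2]
    exact FourDesignAux.part2 hd hξ.eigenvalues
end
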